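/- A globular set X is n-truncated if and only if for every k ≥ n the map X_{k+1} → X_k × X_k, c ↦ (s(c), t(c)), is injective and its image is the diagonal {(x, x) : x ∈ X_k}; that is, if and only if for every k ≥ n every (k+1)-cell of X has equal source and target, and every k-cell x of X is the source (and target) of exactly one (k+1)-cell. -/

import Mathlib

open CategoryTheory CategoryTheory.Limits Opposite

/-- Morphisms of the globe category. -/
inductive GlobeHom : ℕ → ℕ → Type where
  | ident (m : ℕ) : GlobeHom m m
  | sig {m n : ℕ} (h : m < n) : GlobeHom m n
  | tau {m n : ℕ} (h : m < n) : GlobeHom m n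

/-- Composition in the globe category: determined by the inner factor. -/
def GlobeHom.comp : {a b c : ℕ} → GlobeHom a b → GlobeHom b c → GlobeHom a c
  | _, _, _, .ident _, g => g
  | _, _, _, .sig h, .ident _ => .sig h
  | _, _, _, .sig h, .sig h' => .sig (h.trans h')
  | _, _, _, .sig h, .tau h' => .sig (h.trans h')
  | _, _, _, .tau h, .ident _ => .tau h
  | _, _, _, .tau h, .sig h' => .tau (h.trans h')
  | _, _, _, .tau h, .tau h' => .tau (h.trans h')

lemma GlobeHom.comp_assoc : ∀ {a b c d : ℕ} (f : GlobeHom a b) (g : GlobeHom b c)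
    (h : GlobeHom c d), (f.comp g).comp h = f.comp (g.comp h) := by
  intro a b c d f g h
  cases f <;> cases g <;> cases h <;> rfl

lemma GlobeHom.le : ∀ {a b : ℕ}, GlobeHom a b → a ≤ b
  | _, _, .ident _ => le_rfl
  | _, _, .sig h => h.le
  | _, _, .tau h => h.le

/-- The globe category `G`: objects are natural numbers. -/
def Globe : Type := ℕ

instance : Category Globe where
  Hom m n := GlobeHom m n
  id m := GlobeHom.ident m
  comp f g := f.comp g
  id_comp _ := rfl
  comp_id := by rintro _ _ (_|_|_) <;> rfl
  assoc f g h := GlobeHom.comp_assoc f g h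

/-- The object of `Globe` corresponding to `k : ℕ`. -/
def gl (k : ℕ) : Globe := k

/-- The underlying natural number of an object of `Globe`. -/
def gval (m : Globe) : ℕ := m

/-- Globular sets: presheaves on the globe category. -/
abbrev GlobSet := Globeᵒᵖ ⥤ Type

/-- The source map `X_{k+1} → X_k` of a globular set. -/
def gsrc (X : GlobSet) (k : ℕ) : X.obj (op (gl (k+1))) → X.obj (op (gl k)) :=
  X.map (Quiver.Hom.op (show gl k ⟶ gl (k+1) from GlobeHom.sig (Nat.lt_succ_self k)))

/-- The target map `X_{k+1} → X_k` of a globular set. -/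
def gtgt (X : GlobSet) (k : ℕ) : X.obj (op (gl (k+1))) → X.obj (op (gl k)) :=
  X.map (Quiver.Hom.op (show gl k ⟶ gl (k+1) from GlobeHom.tau (Nat.lt_succ_self k)))

/-- Two `k`-cells are parallel if `k = 0` or they have the same source and target. -/
def Parallel (X : GlobSet) : (k : ℕ) → X.obj (op (gl k)) → X.obj (op (gl k)) → Prop
  | 0, _, _ => True
  | (k+1), x, y => gsrc X k x = gsrc X k y ∧ gtgt X k x = gtgt X k y

/-- The full subcategory `G_n` of the globe category on objects `≤ n`. -/
def GlobeLE (n : ℕ) := ObjectProperty.FullSubcategory (fun m : Globe => gval m ≤ n)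

instance (n : ℕ) : Category (GlobeLE n) := ObjectProperty.FullSubcategory.category _

/-- The inclusion `ι_n : G_n ⥤ G`. -/
def iotaGlobe (n : ℕ) : GlobeLE n ⥤ Globe := ObjectProperty.ι _

/-- A morphism of globes coming from an equality of dimensions. -/
def GlobeHom.ofEq : {a b : ℕ} → a = b → GlobeHom a b
  | _, _, rfl => .ident _

/-- A tag distinguishing the three kinds of globe morphisms. -/
def GlobeHom.tag : {a b : ℕ} → GlobeHom a b → ℕ
  | _, _, .ident _ => 0
  | _, _, .sig _ => 1
  | _, _, .tau _ => 2

lemma GlobeHom.ext_tag : ∀ {a b : ℕ} (f g : GlobeHom a b), f.tag = g.tag → f = g := by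
  intro a b f g h
  cases f <;> cases g <;> simp_all [GlobeHom.tag]

lemma GlobeHom.tag_comp : ∀ {a b c : ℕ} (f : GlobeHom a b) (g : GlobeHom b c),
    (f.comp g).tag = if f.tag = 0 then g.tag else f.tag := by
  intro a b c f g
  cases f <;> cases g <;> simp [GlobeHom.comp, GlobeHom.tag]

lemma GlobeHom.tag_ofEq {a b : ℕ} (h : a = b) : (GlobeHom.ofEq h).tag = 0 := by
  cases h; rfl

/-- The truncation of a globe morphism. -/
def GlobeHom.trunc (n : ℕ) : {a b : ℕ} → GlobeHom a b → GlobeHom (min a n) (min b n)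
  | _, _, .ident m => .ident _
  | a, b, .sig h => if h' : min a n < min b n then .sig h' else .ofEq (by omega)
  | a, b, .tau h => if h' : min a n < min b n then .tau h' else .ofEq (by omega)

lemma GlobeHom.tag_trunc (n : ℕ) : ∀ {a b : ℕ} (f : GlobeHom a b),
    (f.trunc n).tag = if min a n < min b n then f.tag else 0 := by
  intro a b f
  cases f with
  | ident => simp [GlobeHom.trunc, GlobeHom.tag]
  | sig h =>
      rw [GlobeHom.trunc]
      split
      · simp_all [GlobeHom.tag]
      · rw [GlobeHom.tag_ofEq]
  | tau h =>
      rw [GlobeHom.trunc]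
      split
      · simp_all [GlobeHom.tag]
      · rw [GlobeHom.tag_ofEq]

/-- The truncation functor `t_n : G ⥤ G_n`. -/
def truncFunctor (n : ℕ) : Globe ⥤ GlobeLE n where
  obj k := ⟨gl (min (gval k) n), min_le_right _ _⟩
  map {a b} f := ObjectProperty.homMk (GlobeHom.trunc n f)
  map_id _ := rfl
  map_comp {a b c} f g := by
    apply ObjectProperty.hom_ext
    apply GlobeHom.ext_tag
    revert f g
    intro (f : GlobeHom (gval a) (gval b)) (g : GlobeHom (gval b) (gval c))
    have hab := GlobeHom.le f
    have hbc := GlobeHom.le g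
    show ((GlobeHom.comp (a := gval a) (b := gval b) (c := gval c) f g).trunc n).tag =
      ((GlobeHom.trunc n (a := gval a) (b := gval b) f).comp
        (GlobeHom.trunc n (a := gval b) (b := gval c) g)).tag
    rw [GlobeHom.tag_trunc, GlobeHom.tag_comp, GlobeHom.tag_comp, GlobeHom.tag_trunc,
      GlobeHom.tag_trunc]
    cases f <;> cases g <;> simp [GlobeHom.tag] <;> split_ifs <;> omega

/-- The precomposition functor `t_n^*`. -/
def tStar (n : ℕ) : ((GlobeLE n)ᵒᵖ ⥤ Type) ⥤ GlobSet :=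
  (Functor.whiskeringLeft _ _ _).obj (truncFunctor n).op

/-- The left Kan extension functor `t_{n!}`, left adjoint of `t_n^*`. -/
noncomputable def tLan (n : ℕ) : GlobSet ⥤ ((GlobeLE n)ᵒᵖ ⥤ Type) :=
  (truncFunctor n).op.lan

/-- The adjunction `t_{n!} ⊣ t_n^*`. -/
noncomputable def tAdj (n : ℕ) : tLan n ⊣ tStar n :=
  Functor.lanAdjunction _ _

/-- A globular set is `n`-truncated if the unit of `t_{n!} ⊣ t_n^*` is an isomorphism at it. -/
def IsTruncated (n : ℕ) (X : GlobSet) : Prop := IsIso ((tAdj n).unit.app X)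

/-- The restriction functor `ι_n^*`. -/
def iotaStar (n : ℕ) : GlobSet ⥤ ((GlobeLE n)ᵒᵖ ⥤ Type) :=
  (Functor.whiskeringLeft _ _ _).obj (iotaGlobe n).op

/-- The right Kan extension functor `ι_{n*}`, right adjoint of `ι_n^*`. -/
noncomputable def iotaRan (n : ℕ) : ((GlobeLE n)ᵒᵖ ⥤ Type) ⥤ GlobSet :=
  (iotaGlobe n).op.ran

/-- The adjunction `ι_n^* ⊣ ι_{n*}`. -/
noncomputable def iotaAdj (n : ℕ) : iotaStar n ⊣ iotaRan n :=
  Functor.ranAdjunction _ _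

/-- A globular set is `n`-coskeletal if the unit of `ι_n^* ⊣ ι_{n*}` is an isomorphism at it. -/
def IsCoskeletal (n : ℕ) (X : GlobSet) : Prop := IsIso ((iotaAdj n).unit.app X)

/-- The representable globular set `D_k`. -/
def disk (k : ℕ) : GlobSet := yoneda.obj (gl k)

/-- The boundary `∂D_k` of the `k`-disk. -/
def boundary (k : ℕ) : GlobSet where
  obj m := { f : GlobeHom (gval m.unop) k // gval m.unop < k }
  map {m m'} g := TypeCat.ofHom fun f =>
    ⟨GlobeHom.comp g.unop f.1, lt_of_le_of_lt (GlobeHom.le g.unop) f.2⟩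
  map_id m := by ext f; rfl
  map_comp {m m' m''} g h := by
    ext f; exact GlobeHom.comp_assoc h.unop g.unop f.1

/-- The boundary inclusion `∂D_k ⟶ D_k`. -/
def boundaryIncl (k : ℕ) : boundary k ⟶ disk k where
  app m := TypeCat.ofHom fun f => f.1
  naturality m m' g := by ext f; rfl

/-- Any globe morphism between equal dimensions is `ofEq`. -/
lemma GlobeHom.eq_ofEq : ∀ {a b : ℕ} (h : a = b) (f : GlobeHom a b), f = GlobeHom.ofEq h := by
  rintro a _ rfl f
  cases f with
  | ident => rfl
  | sig h => exact absurd h (lt_irrefl _)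
  | tau h => exact absurd h (lt_irrefl _)

lemma GlobeLE.obj_ext {n : ℕ} {o o' : GlobeLE n} (h : o.obj = o'.obj) : o = o' := by
  cases o; cases o'; cases h; rfl

lemma GlobeLE.hom_eq_eqToHom {n : ℕ} {o o' : GlobeLE n} (h : o = o') (f : o ⟶ o') :
    f = eqToHom h := by
  subst h
  exact ObjectProperty.hom_ext _ (GlobeHom.eq_ofEq rfl f.hom)

lemma GlobeLE.hom_ext_tag {n : ℕ} {o o' : GlobeLE n} (f g : o ⟶ o')
    (h : GlobeHom.tag ((f.hom : GlobeHom (gval o.obj) (gval o'.obj))) = GlobeHom.tag g.hom) :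
    f = g :=
  ObjectProperty.hom_ext _ (GlobeHom.ext_tag _ _ h)

lemma GlobeLE.tag_eqToHom {n : ℕ} {o o' : GlobeLE n} (h : o = o') :
    GlobeHom.tag (((eqToHom h).hom : GlobeHom (gval o.obj) (gval o'.obj))) = 0 := by
  subst h; rfl

lemma GlobeLE.tag_comp {n : ℕ} {o o' o'' : GlobeLE n} (f : o ⟶ o') (g : o' ⟶ o'') :
    GlobeHom.tag (((f ≫ g).hom : GlobeHom (gval o.obj) (gval o''.obj))) =
      if GlobeHom.tag ((f.hom : GlobeHom (gval o.obj) (gval o'.obj))) = 0 then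
        GlobeHom.tag ((g.hom : GlobeHom (gval o'.obj) (gval o''.obj)))
      else GlobeHom.tag ((f.hom : GlobeHom (gval o.obj) (gval o'.obj))) :=
  GlobeHom.tag_comp _ _

lemma GlobeLE.hom_le {n : ℕ} {o o' : GlobeLE n} (f : o ⟶ o') : gval o.obj ≤ gval o'.obj :=
  GlobeHom.le ((f.hom : GlobeHom (gval o.obj) (gval o'.obj)))

/-- `ι_n ⋙ t_n = 𝟭`. -/
lemma iota_comp_trunc (n : ℕ) : iotaGlobe n ⋙ truncFunctor n = 𝟭 (GlobeLE n) := by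
  refine CategoryTheory.Functor.ext (fun o => GlobeLE.obj_ext (min_eq_left o.property))
    (fun o o' f => ?_)
  simp only [Functor.id_map]
  apply GlobeLE.hom_ext_tag
  rw [GlobeLE.tag_comp, GlobeLE.tag_comp, GlobeLE.tag_eqToHom, GlobeLE.tag_eqToHom]
  have h1 : GlobeHom.tag ((iotaGlobe n ⋙ truncFunctor n).map f).hom =
      if min (gval o.obj) n < min (gval o'.obj) n then
        GlobeHom.tag ((f.hom : GlobeHom (gval o.obj) (gval o'.obj))) else 0 :=
    GlobeHom.tag_trunc n f.hom
  rw [h1]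
  have ho : gval o.obj ≤ n := o.property
  have ho' : gval o'.obj ≤ n := o'.property
  by_cases hlt : gval o.obj < gval o'.obj
  · rw [if_pos (show min (gval o.obj) n < min (gval o'.obj) n by omega)]
    by_cases h0 : GlobeHom.tag ((f.hom : GlobeHom (gval o.obj) (gval o'.obj))) = 0 <;>
      simp [h0]
  · have heq : gval o.obj = gval o'.obj := le_antisymm (GlobeLE.hom_le f) (by omega)
    have hf := GlobeHom.eq_ofEq heq ((f.hom : GlobeHom (gval o.obj) (gval o'.obj)))
    rw [if_neg (by omega), hf]
    erw [GlobeHom.tag_ofEq]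
    simp
/-- The canonical morphism `min k n → k` in the globe category. -/
def toTrunc (n k : ℕ) : gl (min k n) ⟶ gl k :=
  if h : min k n < k then GlobeHom.sig h else GlobeHom.ofEq (show min k n = k by omega)

lemma truncObjEq (n k : ℕ) :
    (truncFunctor n).obj (gl (min k n)) = (truncFunctor n).obj (gl k) :=
  GlobeLE.obj_ext (by show min (min k n) n = min k n; omega)

lemma trunc_toTrunc (n k : ℕ) :
    (truncFunctor n).map (toTrunc n k) = eqToHom (truncObjEq n k) :=
  GlobeLE.hom_eq_eqToHom _ _

lemma app_transport (n : ℕ) {Y Y' : (GlobeLE n)ᵒᵖ ⥤ Type}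
    (α : (tStar n).obj Y ⟶ (tStar n).obj Y') (k : ℕ)
    (E1 : ((tStar n).obj Y).obj (op (gl k)) = ((tStar n).obj Y).obj (op (gl (min k n))))
    (E2 : ((tStar n).obj Y').obj (op (gl (min k n))) = ((tStar n).obj Y').obj (op (gl k))) :
    α.app (op (gl k)) = eqToHom E1 ≫ α.app (op (gl (min k n))) ≫ eqToHom E2 := by
  have key := α.naturality (toTrunc n k).op
  have hY : ((tStar n).obj Y).map (toTrunc n k).op = eqToHom E1 := by
    show Y.map ((truncFunctor n).map (toTrunc n k)).op = _
    rw [trunc_toTrunc, eqToHom_op, eqToHom_map]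
    rfl
  have hY' : ((tStar n).obj Y').map (toTrunc n k).op = eqToHom E2.symm := by
    show Y'.map ((truncFunctor n).map (toTrunc n k)).op = _
    rw [trunc_toTrunc, eqToHom_op, eqToHom_map]
    rfl
  rw [hY, hY'] at key
  rw [← Category.assoc, key, Category.assoc, eqToHom_trans, eqToHom_refl, Category.comp_id]

instance tStar_faithful (n : ℕ) : (tStar n).Faithful where
  map_injective {Y Y'} {β β'} h := by
    apply NatTrans.ext
    funext o
    have e : Opposite.op ((truncFunctor n).obj (gl (gval o.unop.obj))) = o :=
      congrArg Opposite.op (GlobeLE.obj_ext (min_eq_left o.unop.property))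
    rw [← e]
    exact congrArg (fun γ => γ.app (Opposite.op (gl (gval o.unop.obj)))) h
lemma presheafEq (n : ℕ) (Y : (GlobeLE n)ᵒᵖ ⥤ Type) :
    (iotaStar n).obj ((tStar n).obj Y) = Y := by
  show (iotaGlobe n ⋙ truncFunctor n).op ⋙ Y = Y
  rw [iota_comp_trunc]; rfl

instance tStar_full (n : ℕ) : (tStar n).Full where
  map_surjective {Y Y'} α := by
    refine ⟨eqToHom (presheafEq n Y).symm ≫ (iotaStar n).map α ≫ eqToHom (presheafEq n Y'), ?_⟩
    apply NatTrans.ext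
    funext o
    show (eqToHom (presheafEq n Y).symm ≫ (iotaStar n).map α ≫ eqToHom (presheafEq n Y')).app
        ((truncFunctor n).op.obj o) = α.app o
    rw [NatTrans.comp_app, NatTrans.comp_app, eqToHom_app, eqToHom_app]
    exact (app_transport n α (gval o.unop) _ _).symm
/-- Reformulated truncation condition: above level `n`, source equals target and is bijective. -/
def Cond (n : ℕ) (X : GlobSet) : Prop :=
  ∀ k : ℕ, n ≤ k → gsrc X k = gtgt X k ∧ Function.Bijective (gsrc X k)

lemma cond_iff (n : ℕ) (X : GlobSet) :
    (∀ k : ℕ, n ≤ k →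
        Function.Injective (fun c : X.obj (op (gl (k+1))) => (gsrc X k c, gtgt X k c)) ∧
        Set.range (fun c : X.obj (op (gl (k+1))) => (gsrc X k c, gtgt X k c)) =
          {p : X.obj (op (gl k)) × X.obj (op (gl k)) | p.1 = p.2}) ↔ Cond n X := by
  constructor
  · intro H k hk
    obtain ⟨hinj, hran⟩ := H k hk
    have hst : gsrc X k = gtgt X k := by
      funext c
      have hm : (gsrc X k c, gtgt X k c) ∈
          {p : X.obj (op (gl k)) × X.obj (op (gl k)) | p.1 = p.2} := by
        rw [← hran]; exact ⟨c, rfl⟩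
      exact hm
    refine ⟨hst, ?_, ?_⟩
    · intro c c' hcc
      have ht : gtgt X k c = gtgt X k c' := by
        rw [← congrFun hst c, ← congrFun hst c', hcc]
      exact hinj (Prod.ext hcc ht)
    · intro x
      have hm : (x, x) ∈ Set.range
          (fun c : X.obj (op (gl (k+1))) => (gsrc X k c, gtgt X k c)) := by
        rw [hran]; exact rfl
      obtain ⟨c, hc⟩ := hm
      exact ⟨c, congrArg Prod.fst hc⟩
  · intro H k hk
    obtain ⟨hst, hinj, hsurj⟩ := H k hk
    constructor
    · intro c c' h
      exact hinj (congrArg Prod.fst h)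
    · ext p
      constructor
      · rintro ⟨c, rfl⟩
        exact congrFun hst c
      · intro hp
        obtain ⟨c, hc⟩ := hsurj p.1
        refine ⟨c, ?_⟩
        have h2 : gtgt X k c = p.2 := by rw [← congrFun hst c, hc]; exact hp
        exact Prod.ext hc h2

/-- `t_n^* Y` always satisfies the condition. -/
lemma cond_tStar (n : ℕ) (Y : (GlobeLE n)ᵒᵖ ⥤ Type) : Cond n ((tStar n).obj Y) := by
  intro k hk
  have hE : (truncFunctor n).obj (gl k) = (truncFunctor n).obj (gl (k+1)) :=
    GlobeLE.obj_ext (by show min k n = min (k+1) n; omega)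
  have hs : gsrc ((tStar n).obj Y) k = Y.map (eqToHom hE).op := by
    show ⇑(Y.map ((truncFunctor n).map
      (show gl k ⟶ gl (k+1) from GlobeHom.sig (Nat.lt_succ_self k))).op) = _
    rw [GlobeLE.hom_eq_eqToHom hE ((truncFunctor n).map _)]
  have ht : gtgt ((tStar n).obj Y) k = Y.map (eqToHom hE).op := by
    show ⇑(Y.map ((truncFunctor n).map
      (show gl k ⟶ gl (k+1) from GlobeHom.tau (Nat.lt_succ_self k))).op) = _
    rw [GlobeLE.hom_eq_eqToHom hE ((truncFunctor n).map _)]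
  refine ⟨hs.trans ht.symm, ?_⟩
  rw [hs, eqToHom_op, eqToHom_map]
  exact (isIso_iff_bijective _).mp inferInstance

/-- The condition is invariant under isomorphism. -/
lemma cond_of_iso (n : ℕ) {X X' : GlobSet} (e : X ≅ X') (h : Cond n X) : Cond n X' := by
  intro k hk
  obtain ⟨hst, hbij⟩ := h k hk
  have nats : ∀ c, e.hom.app (op (gl k)) (gsrc X k c) = gsrc X' k (e.hom.app (op (gl (k+1))) c) :=
    fun c => NatTrans.naturality_apply e.hom (Quiver.Hom.op (show gl k ⟶ gl (k+1) from GlobeHom.sig (Nat.lt_succ_self k))) c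
  have natt : ∀ c, e.hom.app (op (gl k)) (gtgt X k c) = gtgt X' k (e.hom.app (op (gl (k+1))) c) :=
    fun c => NatTrans.naturality_apply e.hom (Quiver.Hom.op (show gl k ⟶ gl (k+1) from GlobeHom.tau (Nat.lt_succ_self k))) c
  have hs : gsrc X' k = fun c => e.hom.app (op (gl k)) (gsrc X k (e.inv.app (op (gl (k+1))) c)) := by
    funext c; rw [nats, Iso.inv_hom_id_app_apply]
  have ht : gtgt X' k = fun c => e.hom.app (op (gl k)) (gtgt X k (e.inv.app (op (gl (k+1))) c)) := by
    funext c; rw [natt, Iso.inv_hom_id_app_apply]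
  refine ⟨by rw [hs, ht, hst], ?_⟩
  rw [hs]
  have h1 : Function.Bijective (e.inv.app (op (gl (k+1)))) :=
    (isIso_iff_bijective _).mp inferInstance
  have h2 : Function.Bijective (e.hom.app (op (gl k))) :=
    (isIso_iff_bijective _).mp inferInstance
  exact (h2.comp hbij).comp h1

/-- A step morphism `a+1 → b`. -/
def up (a b : ℕ) (h : a < b) : gl (a+1) ⟶ gl b :=
  if h' : a+1 < b then GlobeHom.sig h' else GlobeHom.ofEq (show a+1 = b by omega)

lemma sig_factor (a b : ℕ) (h : a < b) :
    (GlobeHom.sig h : gl a ⟶ gl b) =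
      (GlobeHom.sig (Nat.lt_succ_self a) : gl a ⟶ gl (a+1)) ≫ up a b h := by
  apply GlobeHom.ext_tag
  show (GlobeHom.sig h).tag = ((GlobeHom.sig (Nat.lt_succ_self a)).comp (up a b h)).tag
  erw [GlobeHom.tag_comp]
  simp [GlobeHom.tag]

lemma tau_factor (a b : ℕ) (h : a < b) :
    (GlobeHom.tau h : gl a ⟶ gl b) =
      (GlobeHom.tau (Nat.lt_succ_self a) : gl a ⟶ gl (a+1)) ≫ up a b h := by
  apply GlobeHom.ext_tag
  show (GlobeHom.tau h).tag = ((GlobeHom.tau (Nat.lt_succ_self a)).comp (up a b h)).tag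
  erw [GlobeHom.tag_comp]
  simp [GlobeHom.tag]

lemma tag_zero_eq : ∀ {a b : ℕ} (f : GlobeHom a b), f.tag = 0 → a = b := by
  intro a b f h
  cases f with
  | ident => rfl
  | sig h' => exact absurd h (by simp [GlobeHom.tag])
  | tau h' => exact absurd h (by simp [GlobeHom.tag])

lemma eq_tag_zero : ∀ {a b : ℕ} (f : GlobeHom a b), a = b → f.tag = 0 := by
  rintro a _ f rfl
  rw [GlobeHom.eq_ofEq rfl f, GlobeHom.tag_ofEq]

lemma tag_toTrunc (n k : ℕ) : GlobeHom.tag (toTrunc n k) = if min k n < k then 1 else 0 := by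
  unfold toTrunc
  split
  · next h' => simp [GlobeHom.tag, if_pos h']
  · next h' => erw [GlobeHom.tag_ofEq]

/-- Under `Cond`, the sigma and tau maps agree at levels `≥ n`. -/
lemma map_sig_eq_map_tau {n : ℕ} {X : GlobSet} (h : Cond n X) (a b : ℕ) (hlt : a < b)
    (hn : n ≤ a) :
    X.map (Quiver.Hom.op (GlobeHom.sig hlt : gl a ⟶ gl b)) =
      X.map (Quiver.Hom.op (GlobeHom.tau hlt : gl a ⟶ gl b)) := by
  rw [sig_factor a b hlt, tau_factor a b hlt, op_comp, op_comp,
    Functor.map_comp, Functor.map_comp]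
  show X.map (up a b hlt).op ≫ X.map (Quiver.Hom.op
      (show gl a ⟶ gl (a+1) from GlobeHom.sig (Nat.lt_succ_self a))) =
    X.map (up a b hlt).op ≫ X.map (Quiver.Hom.op
      (show gl a ⟶ gl (a+1) from GlobeHom.tau (Nat.lt_succ_self a)))
  congr 1
  ext x
  exact congrFun (h a hn).1 x

/-- Under `Cond`, any two parallel globe maps act equally at levels `≥ n`. -/
lemma map_eq {n : ℕ} {X : GlobSet} (h : Cond n X) (a b : ℕ) (f g : gl a ⟶ gl b)
    (hn : n ≤ a) : X.map f.op = X.map g.op := by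
  by_cases hab : a < b
  · have hf : ∀ f' : gl a ⟶ gl b,
        X.map f'.op = X.map (Quiver.Hom.op (GlobeHom.sig hab : gl a ⟶ gl b)) := by
      intro (f' : GlobeHom a b)
      cases f' with
      | ident => exact absurd hab (lt_irrefl _)
      | sig h' => rfl
      | tau h' => exact (map_sig_eq_map_tau h a b h' hn).symm
    rw [hf f, hf g]
  · have heq : a = b := le_antisymm (GlobeHom.le f) (by omega)
    rw [GlobeHom.eq_ofEq heq f, GlobeHom.eq_ofEq heq g]

lemma ofEq_bij {X : GlobSet} : ∀ (a b : ℕ) (h : a = b),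
    Function.Bijective (X.map (Quiver.Hom.op (GlobeHom.ofEq h : gl a ⟶ gl b))) := by
  rintro a _ rfl
  show Function.Bijective (X.map (Quiver.Hom.op (𝟙 (gl a))))
  rw [op_id, X.map_id]
  exact Function.bijective_id

/-- Under `Cond`, every globe map out of a level `≥ n` acts bijectively. -/
lemma map_bij {n : ℕ} {X : GlobSet} (h : Cond n X) :
    ∀ (d a b : ℕ), b ≤ a + d → ∀ f : gl a ⟶ gl b, n ≤ a → Function.Bijective (X.map f.op) := by
  intro d
  induction d with
  | zero =>
      intro a b hd f hn
      have heq : a = b := le_antisymm (GlobeHom.le f) (by omega)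
      rw [GlobeHom.eq_ofEq heq f]
      exact ofEq_bij a b heq
  | succ d ih =>
      intro a b hd f hn
      by_cases hab : a < b
      · have hup : Function.Bijective (X.map (up a b hab).op) :=
          ih (a+1) b (by omega) (up a b hab) (by omega)
        have hs : Function.Bijective (gsrc X a) := (h a hn).2
        have key : X.map f.op =
            X.map (up a b hab).op ≫ X.map
              (Quiver.Hom.op (GlobeHom.sig (Nat.lt_succ_self a) : gl a ⟶ gl (a+1))) := by
          rw [← Functor.map_comp, ← op_comp, ← sig_factor a b hab]
          exact map_eq h a b f _ hn
        rw [key]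
        exact hs.comp hup
      · have heq : a = b := le_antisymm (GlobeHom.le f) (by omega)
        rw [GlobeHom.eq_ofEq heq f]
        exact ofEq_bij a b heq
/-- View a morphism of `G_n` as a morphism of the globe category. -/
def toGlobe {n : ℕ} {p q : GlobeLE n} (f : p ⟶ q) : gl (gval p.obj) ⟶ gl (gval q.obj) := f.hom

/-- Component of the comparison map `X ⟶ t_n^* ι_n^* X`. -/
def phiApp (n : ℕ) (X : GlobSet) (o : Globeᵒᵖ) :
    X.obj o ⟶ ((tStar n).obj ((iotaStar n).obj X)).obj o :=
  X.map (Quiver.Hom.op (toTrunc n (gval o.unop)))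

lemma phi_natural {n : ℕ} {X : GlobSet} (h : Cond n X) {o o' : Globeᵒᵖ} (u : o ⟶ o') :
    X.map u ≫ phiApp n X o' = phiApp n X o ≫ ((tStar n).obj ((iotaStar n).obj X)).map u := by
  have l1 : X.map (Quiver.Hom.op (toTrunc n (gval o'.unop) ≫ u.unop)) =
      X.map u ≫ phiApp n X o' := by
    exact X.map_comp _ _
  have r1 : X.map (Quiver.Hom.op
      (toGlobe ((truncFunctor n).map u.unop) ≫ toTrunc n (gval o.unop))) =
      phiApp n X o ≫ ((tStar n).obj ((iotaStar n).obj X)).map u := by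
    exact X.map_comp _ _
  rw [← l1, ← r1]
  by_cases hb : n ≤ gval o'.unop
  · exact map_eq h _ _ _ _ (by omega)
  · have harg : (toTrunc n (gval o'.unop) ≫ u.unop :
        gl (min (gval o'.unop) n) ⟶ gl (gval o.unop)) =
        toGlobe ((truncFunctor n).map u.unop) ≫ toTrunc n (gval o.unop) := by
      apply GlobeHom.ext_tag
      show (GlobeHom.comp (a := min (gval o'.unop) n) (b := gval o'.unop) (c := gval o.unop)
          (toTrunc n (gval o'.unop)) u.unop).tag =
        (GlobeHom.comp (a := min (gval o'.unop) n) (b := min (gval o.unop) n) (c := gval o.unop)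
          (GlobeHom.trunc n u.unop) (toTrunc n (gval o.unop))).tag
      erw [GlobeHom.tag_comp, GlobeHom.tag_comp, tag_toTrunc, tag_toTrunc, GlobeHom.tag_trunc]
      have hle : gval o'.unop ≤ gval o.unop := GlobeHom.le u.unop
      have e1 : gval (unop o) = unop o := rfl
      have e2 : gval (unop o') = unop o' := rfl
      rcases Nat.eq_or_lt_of_le hle with heq | hlt
      · have h0 : GlobeHom.tag (u.unop : GlobeHom (gval o'.unop) (gval o.unop)) = 0 :=
          eq_tag_zero _ heq
        erw [h0]
        split_ifs <;> omega
      · have h1 : GlobeHom.tag (a := gval o'.unop) (b := gval o.unop) u.unop ≠ 0 :=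
          fun hz => (by omega : ¬ gval o'.unop = gval o.unop) (tag_zero_eq _ hz)
        split_ifs <;> omega
    exact congrArg (fun f => X.map (Quiver.Hom.op f)) harg

lemma essImage_of_cond (n : ℕ) (X : GlobSet) (h : Cond n X) : (tStar n).essImage X := by
  let φ : X ⟶ (tStar n).obj ((iotaStar n).obj X) :=
    { app := phiApp n X
      naturality := fun o o' u => phi_natural h u }
  have hb : ∀ o : Globeᵒᵖ, Function.Bijective (φ.app o) := by
    intro o
    by_cases hk : n ≤ gval o.unop
    · exact map_bij h (gval o.unop) (min (gval o.unop) n) (gval o.unop) (by omega)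
        (toTrunc n (gval o.unop)) (by omega)
    · have e : toTrunc n (gval o.unop) =
          GlobeHom.ofEq (show min (gval o.unop) n = gval o.unop by omega) := dif_neg (by omega)
      show Function.Bijective (X.map (Quiver.Hom.op (toTrunc n (gval o.unop))))
      rw [e]
      exact ofEq_bij _ _ _
  haveI : ∀ o, IsIso (φ.app o) := fun o => (isIso_iff_bijective _).mpr (hb o)
  haveI : IsIso φ := NatIso.isIso_of_isIso_app φ
  exact ⟨(iotaStar n).obj X, ⟨(asIso φ).symm⟩⟩


/-- A globular set is `n`-truncated iff for every `k ≥ n` the map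
`X_{k+1} → X_k × X_k, c ↦ (s c, t c)` is injective with image the diagonal. -/
theorem statement2 (n : ℕ) (X : GlobSet) :
    IsTruncated n X ↔
      ∀ k : ℕ, n ≤ k →
        Function.Injective (fun c : X.obj (op (gl (k+1))) => (gsrc X k c, gtgt X k c)) ∧
        Set.range (fun c : X.obj (op (gl (k+1))) => (gsrc X k c, gtgt X k c)) =
          {p : X.obj (op (gl k)) × X.obj (op (gl k)) | p.1 = p.2} := by
  rw [cond_iff n X]
  constructor
  · intro hT
    obtain ⟨Y, ⟨e⟩⟩ := ((tAdj n).isIso_unit_app_iff_mem_essImage).mp hT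
    exact cond_of_iso n e (cond_tStar n Y)
  · intro hR
    exact ((tAdj n).isIso_unit_app_iff_mem_essImage).mpr (essImage_of_cond n X hR)
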